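/- arXiv:math/0412330 — 2 statements merged into one kernel-verified Lean document; each statement's English description precedes it below -/
import Mathlib

section
/- Let U = R ⧸ ((λ−1)(μ+1)) be the quotient of R by the principal ideal generated by (λ−1)(μ+1), and let C = R[x] ⧸ (λx² − λx − μ² − μ, λx² − μx − μ − 1) be the quotient of the polynomial ring R[x] by the ideal generated by the two listed polynomials. Then there is no R-algebra isomorphism between U and C. -/
noncomputable section

open Polynomial

/-- The Laurent polynomial ring `ℤ[λ^{±1}, μ^{±1}]`. -/
abbrev R : Type := AddMonoidAlgebra ℤ (ℤ × ℤ)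

/-- The variable `λ`. -/
def lam : R := AddMonoidAlgebra.single (1, 0) 1

/-- The variable `μ`. -/
def mu : R := AddMonoidAlgebra.single (0, 1) 1

/-- The cord algebra of the unknot: `R ⧸ ((λ−1)(μ+1))`. -/
abbrev U : Type := R ⧸ Ideal.span {(lam - 1) * (mu + 1)}

/-- The ideal `(λx² − λx − μ² − μ, λx² − μx − μ − 1)` of `R[x]`. -/
def trefIdeal : Ideal (Polynomial R) :=
  Ideal.span {C lam * X ^ 2 - C lam * X - C (mu ^ 2) - C mu,
              C lam * X ^ 2 - C mu * X - C mu - 1}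

/-- The cord algebra of the left-handed trefoil:
`R[x] ⧸ (λx² − λx − μ² − μ, λx² − μx − μ − 1)`. -/
abbrev CTref : Type := Polynomial R ⧸ trefIdeal

/-- The monoid hom sending `(a, b)` to `8^a * 2^b` in `ℚ`. -/
def fMon : Multiplicative (ℤ × ℤ) →* ℚ where
  toFun p := 8 ^ (Multiplicative.toAdd p).1 * 2 ^ (Multiplicative.toAdd p).2
  map_one' := by simp
  map_mul' x y := by
    have h8 : (8 : ℚ) ≠ 0 := by norm_num
    have h2 : (2 : ℚ) ≠ 0 := by norm_num
    simp only [toAdd_mul, Prod.fst_add, Prod.snd_add, zpow_add₀ h8, zpow_add₀ h2]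
    ring

/-- The evaluation `λ ↦ 8`, `μ ↦ 2`. -/
def psi : R →ₐ[ℤ] ℚ := AddMonoidAlgebra.lift ℤ ℚ (ℤ × ℤ) fMon

lemma psi_lam : psi lam = 8 := by
  simp [psi, lam, AddMonoidAlgebra.lift_single, fMon]

lemma psi_mu : psi mu = 2 := by
  simp [psi, mu, AddMonoidAlgebra.lift_single, fMon]

instance algRQ : Algebra R ℚ := psi.toRingHom.toAlgebra

lemma algebraMap_RQ (r : R) : algebraMap R ℚ r = psi r := rfl

/-- The `R`-algebra map `CTref →ₐ[R] ℚ`, sending `x ↦ -1/2`. -/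
def g : CTref →ₐ[R] ℚ := by
  refine Ideal.Quotient.liftₐ trefIdeal (aeval (-1/2 : ℚ)) ?_
  intro a ha
  refine Submodule.span_induction ?_ ?_ ?_ ?_ ha
  · rintro p (rfl | rfl) <;>
    · simp only [map_sub, map_mul, map_pow, aeval_C, aeval_X, map_one,
        algebraMap_RQ, map_pow, psi_lam, psi_mu]
      norm_num
  · simp
  · intro x y _ _ hx hy; simp [map_add, hx, hy]
  · intro r x _ hx
    simp [smul_eq_mul, map_mul, hx]

/-- The cord algebra of the left-handed trefoil is not isomorphic, as an
`R`-algebra, to the cord algebra of the unknot. -/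
theorem unknot_not_isomorphic_trefoil : ¬ Nonempty (U ≃ₐ[R] CTref) := by
  rintro ⟨e⟩
  have h := (g.comp e.toAlgHom).commutes ((lam - 1) * (mu + 1))
  have hz : algebraMap R U ((lam - 1) * (mu + 1)) = 0 := by
    rw [Ideal.Quotient.algebraMap_eq, Ideal.Quotient.eq_zero_iff_mem]
    exact Ideal.subset_span rfl
  rw [hz, map_zero] at h
  have : (0 : ℚ) = 21 := by
    rw [h, algebraMap_RQ]
    simp [map_mul, map_sub, map_add, psi_lam, psi_mu]
    norm_num
  norm_num at this
end
end

section
/- Fix n ≥ 1, maps o, l, r : Fin n → Fin n such that for every α the three indices l(α), r(α), o(α) are pairwise distinct, and ε ∈ ℤ with ε = 1 or ε = −1. Let 𝒜 be the free (noncommutative, unital) R-algebra on generators a_{ij} for i, j ∈ Fin n with i ≠ j. Define n×n matrices over 𝒜: A_{ij} = 1+μ if i = j and a_{ij} if i ≠ j; (Ψ^L)_{αi} = λ^{−ε} if α = 0 and i = r(0), = 1 if α ≠ 0 and i = r(α), = μ if i = l(α), = −a_{l(α)o(α)} if i = o(α), and 0 otherwise; (Ψ^R)_{iα} = λ^{ε}μ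 if α = 0 and i = r(0), = μ if α ≠ 0 and i = r(α), = 1 if i = l(α), = −a_{o(α)l(α)} if i = o(α), and 0 otherwise; (Ψ^L₂)_{αi} = μ if i = l(α), = −a_{l(α)o(α)} if i = o(α), and 0 otherwise; (Ψ^R₁)_{iα} = λ^{ε}μ if α = 0 and i = r(0), = μ if α ≠ 0 and i = r(α), and 0 otherwise. Then for every α ∈ Fin n, the diagonal entries agree: (Ψ^L · A · Ψ^R₁)_{αα} = (Ψ^L₂ · A · Ψ^R)_{αα}. -/
noncomputable section

/-- The Laurent monomial `λᵏ` for `k : ℤ`. -/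
def lamPow (k : ℤ) : R := AddMonoidAlgebra.single (k, 0) 1

/-- Index type of the generators `a_{ij}`, `i ≠ j`. -/
abbrev Idx (n : ℕ) : Type := {p : Fin n × Fin n // p.1 ≠ p.2}

/-- The free noncommutative unital `R`-algebra on the generators `a_{ij}`. -/
abbrev FA (n : ℕ) : Type := FreeAlgebra R (Idx n)

/-- The generator `a_{ij}`. -/
def gen {n : ℕ} (i j : Fin n) (h : i ≠ j) : FA n := FreeAlgebra.ι R ⟨(i, j), h⟩

/-- The matrix `A`: `1 + μ` on the diagonal, `a_{ij}` off the diagonal. -/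
def Amat (n : ℕ) : Matrix (Fin n) (Fin n) (FA n) := fun i j =>
  if h : i = j then algebraMap R (FA n) (1 + mu) else gen i j h

/-- The matrix `Ψ^L` of the framed knot DGA. -/
def PsiL (n : ℕ) [NeZero n] (o l r : Fin n → Fin n)
    (hlo : ∀ α, l α ≠ o α) (ε : ℤ) : Matrix (Fin n) (Fin n) (FA n) :=
  fun α i =>
    if α = 0 ∧ i = r 0 then algebraMap R (FA n) (lamPow (-ε))
    else if α ≠ 0 ∧ i = r α then 1
    else if i = l α then algebraMap R (FA n) mu
    else if i = o α then -(gen (l α) (o α) (hlo α))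
    else 0

/-- The matrix `Ψ^R` of the framed knot DGA. -/
def PsiR (n : ℕ) [NeZero n] (o l r : Fin n → Fin n)
    (hlo : ∀ α, l α ≠ o α) (ε : ℤ) : Matrix (Fin n) (Fin n) (FA n) :=
  fun i α =>
    if α = 0 ∧ i = r 0 then algebraMap R (FA n) (lamPow ε * mu)
    else if α ≠ 0 ∧ i = r α then algebraMap R (FA n) mu
    else if i = l α then 1
    else if i = o α then -(gen (o α) (l α) (hlo α).symm)
    else 0

/-- The matrix `Ψ^L₂` of the framed knot DGA. -/
def PsiL2 (n : ℕ) (o l : Fin n → Fin n) (hlo : ∀ α, l α ≠ o α) :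
    Matrix (Fin n) (Fin n) (FA n) := fun α i =>
  if i = l α then algebraMap R (FA n) mu
  else if i = o α then -(gen (l α) (o α) (hlo α))
  else 0

/-- The matrix `Ψ^R₁` of the framed knot DGA. -/
def PsiR1 (n : ℕ) [NeZero n] (r : Fin n → Fin n) (ε : ℤ) :
    Matrix (Fin n) (Fin n) (FA n) := fun i α =>
  if α = 0 ∧ i = r 0 then algebraMap R (FA n) (lamPow ε * mu)
  else if α ≠ 0 ∧ i = r α then algebraMap R (FA n) mu
  else 0


section Aux

variable {M : Type*} [AddCommMonoid M] {n : ℕ}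

lemma sum1 (x : Fin n) (f : Fin n → M) (h : ∀ i, i ≠ x → f i = 0) :
    ∑ i, f i = f x :=
  Finset.sum_eq_single_of_mem x (Finset.mem_univ x) (fun i _ hi => h i hi)

lemma sum2 (x y : Fin n) (hxy : x ≠ y) (f : Fin n → M)
    (h : ∀ i, i ≠ x → i ≠ y → f i = 0) : ∑ i, f i = f x + f y := by
  classical
  have h1 : ∑ i, f i = ∑ i ∈ ({x, y} : Finset (Fin n)), f i :=
    (Finset.sum_subset (Finset.subset_univ _) fun i _ hi => by
      simp only [Finset.mem_insert, Finset.mem_singleton, not_or] at hi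
      exact h i hi.1 hi.2).symm
  rw [h1, Finset.sum_insert (by simp [hxy]), Finset.sum_singleton]

lemma sum3 (x y z : Fin n) (hxy : x ≠ y) (hxz : x ≠ z) (hyz : y ≠ z)
    (f : Fin n → M) (h : ∀ i, i ≠ x → i ≠ y → i ≠ z → f i = 0) :
    ∑ i, f i = f x + f y + f z := by
  classical
  have h1 : ∑ i, f i = ∑ i ∈ ({x, y, z} : Finset (Fin n)), f i :=
    (Finset.sum_subset (Finset.subset_univ _) fun i _ hi => by
      simp only [Finset.mem_insert, Finset.mem_singleton, not_or] at hi
      exact h i hi.1 hi.2.1 hi.2.2).symm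
  rw [h1, Finset.sum_insert (by simp [hxy, hxz]),
    Finset.sum_insert (by simp [hyz]), Finset.sum_singleton, add_assoc]

lemma fa_neg_mul {n : ℕ} (x y : FA n) : -x * y = -(x * y) := neg_mul x y
lemma fa_mul_neg {n : ℕ} (x y : FA n) : x * -y = -(x * y) := mul_neg x y
lemma fa_neg_neg {n : ℕ} (x : FA n) : -(-x) = x := neg_neg x
lemma fa_smul_neg {n : ℕ} (m : R) (x : FA n) : m • (-x) = -(m • x) := smul_neg m x

instance instTowerNZ (n : ℕ) : IsScalarTower ℕ ℤ (FA n) :=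
  ⟨fun a b x => by rw [nsmul_eq_mul, mul_smul]; exact (Nat.cast_smul_eq_nsmul ℤ a (b • x))⟩

instance instTowerZR (n : ℕ) : IsScalarTower ℤ R (FA n) :=
  ⟨fun a b x => by rw [zsmul_eq_mul, mul_smul, Int.cast_smul_eq_zsmul]⟩

lemma lam_inv (ε : ℤ) : lamPow (-ε) * lamPow ε = 1 := by
  unfold lamPow
  rw [AddMonoidAlgebra.single_mul_single]
  simp [AddMonoidAlgebra.one_def]
  rfl

end Aux

/-- The key identity behind `∂² = 0` on the generators `e_α` of the framed
knot DGA: `(Ψ^L·A·Ψ^R₁)_{αα} = (Ψ^L₂·A·Ψ^R)_{αα}` for every crossing `α`. -/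
theorem framedKnotDGA_differential_squared_zero (n : ℕ) [NeZero n]
    (o l r : Fin n → Fin n)
    (hlo : ∀ α, l α ≠ o α) (hlr : ∀ α, l α ≠ r α) (hro : ∀ α, r α ≠ o α)
    (ε : ℤ) (hε : ε = 1 ∨ ε = -1) :
    ∀ α : Fin n,
      (PsiL n o l r hlo ε * Amat n * PsiR1 n r ε) α α =
        (PsiL2 n o l hlo * Amat n * PsiR n o l r hlo ε) α α := by
  intro α
  have hrl : r α ≠ l α := (hlr α).symm
  have hor : o α ≠ r α := (hro α).symm
  have hol : o α ≠ l α := (hlo α).symm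
  -- reduce LHS outer sum
  have hL : (PsiL n o l r hlo ε * Amat n * PsiR1 n r ε) α α =
      (PsiL n o l r hlo ε * Amat n) α (r α) * PsiR1 n r ε (r α) α := by
    rw [Matrix.mul_apply]
    refine sum1 (r α) _ (fun j hj => ?_)
    have hz : PsiR1 n r ε j α = 0 := by
      rcases eq_or_ne α 0 with h0 | h0
      · subst h0; simp [PsiR1, hj]
      · simp [PsiR1, h0, hj]
    rw [hz, mul_zero]
  have hL2 : (PsiL n o l r hlo ε * Amat n) α (r α) =
      PsiL n o l r hlo ε α (r α) * Amat n (r α) (r α) +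
      PsiL n o l r hlo ε α (l α) * Amat n (l α) (r α) +
      PsiL n o l r hlo ε α (o α) * Amat n (o α) (r α) := by
    rw [Matrix.mul_apply]
    refine sum3 (r α) (l α) (o α) hrl (hro α) (hlo α) _ (fun i h1 h2 h3 => ?_)
    have hz : PsiL n o l r hlo ε α i = 0 := by
      rcases eq_or_ne α 0 with h0 | h0
      · subst h0; simp [PsiL, h1, h2, h3]
      · simp [PsiL, h0, h1, h2, h3]
    rw [hz, zero_mul]
  have hR : (PsiL2 n o l hlo * Amat n * PsiR n o l r hlo ε) α α =
      (PsiL2 n o l hlo * Amat n) α (r α) * PsiR n o l r hlo ε (r α) α +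
      (PsiL2 n o l hlo * Amat n) α (l α) * PsiR n o l r hlo ε (l α) α +
      (PsiL2 n o l hlo * Amat n) α (o α) * PsiR n o l r hlo ε (o α) α := by
    rw [Matrix.mul_apply]
    refine sum3 (r α) (l α) (o α) hrl (hro α) (hlo α) _ (fun j h1 h2 h3 => ?_)
    have hz : PsiR n o l r hlo ε j α = 0 := by
      rcases eq_or_ne α 0 with h0 | h0
      · subst h0; simp [PsiR, h1, h2, h3]
      · simp [PsiR, h0, h1, h2, h3]
    rw [hz, mul_zero]
  have hR2 : ∀ j, (PsiL2 n o l hlo * Amat n) α j =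
      PsiL2 n o l hlo α (l α) * Amat n (l α) j +
      PsiL2 n o l hlo α (o α) * Amat n (o α) j := by
    intro j
    rw [Matrix.mul_apply]
    refine sum2 (l α) (o α) (hlo α) _ (fun i h1 h2 => ?_)
    have hz : PsiL2 n o l hlo α i = 0 := by simp [PsiL2, h1, h2]
    rw [hz, zero_mul]
  rw [hL, hL2, hR, hR2, hR2, hR2]
  have hU : (algebraMap R (FA n)) (1 + mu) = 1 + algebraMap R (FA n) mu := by
    rw [map_add, map_one]
  have eArr : Amat n (r α) (r α) = algebraMap R (FA n) (1 + mu) := dif_pos rfl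
  have eAll : Amat n (l α) (l α) = algebraMap R (FA n) (1 + mu) := dif_pos rfl
  have eAoo : Amat n (o α) (o α) = algebraMap R (FA n) (1 + mu) := dif_pos rfl
  have eAlr : Amat n (l α) (r α) = gen (l α) (r α) (hlr α) := dif_neg (hlr α)
  have eAor : Amat n (o α) (r α) = gen (o α) (r α) hor := dif_neg hor
  have eAol : Amat n (o α) (l α) = gen (o α) (l α) hol := dif_neg hol
  have eAlo : Amat n (l α) (o α) = gen (l α) (o α) (hlo α) := dif_neg (hlo α)
  have eP1 : PsiL2 n o l hlo α (l α) = algebraMap R (FA n) mu := by simp [PsiL2]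
  have eP2 : PsiL2 n o l hlo α (o α) = -(gen (l α) (o α) (hlo α)) := by
    simp [PsiL2, hol]
  rcases eq_or_ne α 0 with h0 | h0
  · subst h0
    have eL1 : PsiL n o l r hlo ε 0 (r 0) = algebraMap R (FA n) (lamPow (-ε)) := by
      simp [PsiL]
    have eL2 : PsiL n o l r hlo ε 0 (l 0) = algebraMap R (FA n) mu := by
      simp [PsiL, hlr 0]
    have eL3 : PsiL n o l r hlo ε 0 (o 0) = -(gen (l 0) (o 0) (hlo 0)) := by
      simp [PsiL, hor, hol]
    have eR1 : PsiR n o l r hlo ε (r 0) 0 = algebraMap R (FA n) (lamPow ε * mu) := by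
      simp [PsiR]
    have eR2 : PsiR n o l r hlo ε (l 0) 0 = 1 := by
      simp [PsiR, hlr 0]
    have eR3 : PsiR n o l r hlo ε (o 0) 0 = -(gen (o 0) (l 0) hol) := by
      simp [PsiR, hor, hol]
    have eQ1 : PsiR1 n r ε (r 0) 0 = algebraMap R (FA n) (lamPow ε * mu) := by
      simp [PsiR1]
    rw [eL1, eL2, eL3, eR1, eR2, eR3, eQ1, eP1, eP2, eArr, eAll, eAoo, eAlr, eAor,
      eAol, eAlo, hU]
    simp only [Algebra.algebraMap_eq_smul_one, mul_add, add_mul, neg_mul, mul_neg,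
      smul_mul_assoc, mul_smul_comm, smul_smul, one_mul, mul_one, neg_neg, mul_assoc]
    simp only [fa_mul_neg, fa_neg_mul, fa_neg_neg, fa_smul_neg, mul_add, add_mul,
      smul_add, smul_mul_assoc, mul_smul_comm, smul_smul, one_mul, mul_one, mul_assoc]
    match_scalars <;> first
      | ring1
      | linear_combination ((1 + mu) * mu) * lam_inv ε
      | linear_combination (mu * (1 + mu)) * lam_inv ε
      | linear_combination mu * lam_inv ε
  · have eL1 : PsiL n o l r hlo ε α (r α) = 1 := by simp [PsiL, h0]
    have eL2 : PsiL n o l r hlo ε α (l α) = algebraMap R (FA n) mu := by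
      simp [PsiL, h0, hlr α]
    have eL3 : PsiL n o l r hlo ε α (o α) = -(gen (l α) (o α) (hlo α)) := by
      simp [PsiL, h0, hor, hol]
    have eR1 : PsiR n o l r hlo ε (r α) α = algebraMap R (FA n) mu := by
      simp [PsiR, h0]
    have eR2 : PsiR n o l r hlo ε (l α) α = 1 := by simp [PsiR, h0, hlr α]
    have eR3 : PsiR n o l r hlo ε (o α) α = -(gen (o α) (l α) hol) := by
      simp [PsiR, h0, hor, hol]
    have eQ1 : PsiR1 n r ε (r α) α = algebraMap R (FA n) mu := by simp [PsiR1, h0]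
    rw [eL1, eL2, eL3, eR1, eR2, eR3, eQ1, eP1, eP2, eArr, eAll, eAoo, eAlr, eAor,
      eAol, eAlo, hU]
    simp only [Algebra.algebraMap_eq_smul_one, mul_add, add_mul, neg_mul, mul_neg,
      smul_mul_assoc, mul_smul_comm, smul_smul, one_mul, mul_one, neg_neg, mul_assoc]
    simp only [fa_mul_neg, fa_neg_mul, fa_neg_neg, fa_smul_neg, mul_add, add_mul,
      smul_add, smul_mul_assoc, mul_smul_comm, smul_smul, one_mul, mul_one, mul_assoc]
    match_scalars <;> ring1
end
end
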